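/- Let c be a positive integer, u an integer, and g : ℝ → ℂ a Schwartz function. Then Σ_{m∈ℤ, gcd(m,c)=1} e^{2πi u m̄ / c} g(m) = (1/c) Σ_{h∈ℤ} S(u, h; c) ĝ(h/c), where m̄ denotes any integer inverse of m modulo c (the left-hand term is independent of the choice), and both series converge absolutely. -/

import Mathlib

open MeasureTheory

/-- A canonical integer inverse of `m` modulo `c` (meaningful when `gcd(m,c)=1`). -/
noncomputable def intInvMod (c : ℕ) (m : ℤ) : ℤ := (((m : ZMod c)⁻¹ : ZMod c).val : ℤ)

/-- The Kloosterman sum `S(u,h;c) = ∑_{1≤x≤c, gcd(x,c)=1} e^{2πi(ux̄+hx)/c}`. -/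
noncomputable def kloostermanS (u h : ℤ) (c : ℕ) : ℂ :=
  ∑ x ∈ Finset.Icc 1 c,
    if Nat.gcd x c = 1 then
      Complex.exp (2 * Real.pi * Complex.I * ((u * intInvMod c x + h * x : ℤ) : ℂ) / c)
    else 0

/-- The Fourier transform `ĝ(ξ) = ∫_ℝ g(y) e^{-2πiξy} dy`. -/
noncomputable def fourierHat (g : ℝ → ℂ) (ξ : ℝ) : ℂ :=
  ∫ y : ℝ, g y * Complex.exp (-(2 * Real.pi * Complex.I * ξ * y))

section Aux

open FourierTransform Real Complex

/-- scaled Schwartz map `y ↦ g (y * c)` -/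
noncomputable def schwartzScale (g : SchwartzMap ℝ ℂ) (c : ℝ) (hc : c ≠ 0) : SchwartzMap ℝ ℂ :=
  SchwartzMap.compCLMOfContinuousLinearEquiv ℝ
    (ContinuousLinearEquiv.unitsEquivAut ℝ (Units.mk0 c hc)) g

lemma schwartzScale_apply (g : SchwartzMap ℝ ℂ) (c : ℝ) (hc : c ≠ 0) (y : ℝ) :
    schwartzScale g c hc y = g (y * c) := rfl

lemma fourierHat_eq (g : SchwartzMap ℝ ℂ) (ξ : ℝ) :
    fourierHat g ξ = 𝓕 (g : ℝ → ℂ) ξ := by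
  rw [fourierHat, Real.fourier_real_eq_integral_exp_smul]
  congr 1 with v
  rw [smul_eq_mul, mul_comm]
  congr 2
  push_cast
  ring

lemma fourier_schwartzScale (g : SchwartzMap ℝ ℂ) (c : ℝ) (hc : 0 < c) (w : ℝ) :
    𝓕 (schwartzScale g c hc.ne' : ℝ → ℂ) w = (1/c : ℂ) * fourierHat g (w/c) := by
  rw [Real.fourier_real_eq_integral_exp_smul, fourierHat]
  have key : ∀ v : ℝ, Complex.exp (↑(-2 * Real.pi * v * w) * Complex.I) • (schwartzScale g c hc.ne' v)
      = (fun t => g t * Complex.exp (-(2 * Real.pi * Complex.I * (w/c) * t))) (v * c) := by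
    intro v
    rw [smul_eq_mul, schwartzScale_apply, mul_comm]
    congr 1
    congr 1
    have hcc : (c:ℂ) ≠ 0 := by exact_mod_cast hc.ne'
    push_cast
    field_simp
  simp_rw [key]
  rw [MeasureTheory.Measure.integral_comp_mul_right
    (fun t => g t * Complex.exp (-(2 * Real.pi * Complex.I * (w/c) * t))) c]
  rw [abs_of_pos (inv_pos.mpr hc)]
  simp [smul_eq_mul, one_div]

/-- summability of a Schwartz function sampled at `h/c`. -/
lemma schwartz_summable_div (f : SchwartzMap ℝ ℂ) (c : ℝ) (hc : 0 < c) :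
    Summable fun h : ℤ => ‖f ((h : ℝ)/c)‖ := by
  obtain ⟨C, hC⟩ := f.decay 2 0
  replace hC := hC.2
  have hsum : Summable (fun h : ℤ => (C * c^2) * (1/(h:ℝ)^2)) :=
    (Real.summable_one_div_int_pow.mpr one_lt_two).mul_left _
  apply Summable.of_norm_bounded_eventually hsum
  have : {h : ℤ | ¬ ‖‖f ((h:ℝ)/c)‖‖ ≤ C * c ^ 2 * (1/(h:ℝ)^2)} ⊆ {0} := by
    intro h hh
    simp only [Set.mem_setOf_eq, norm_norm] at hh
    by_contra h0
    apply hh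
    have hne : ((h:ℝ)) ≠ 0 := by
      simp only [Set.mem_singleton_iff] at h0
      exact_mod_cast h0
    have h1 : (0:ℝ) < ((h:ℝ)/c)^2 := by positivity
    have h2 := hC ((h:ℝ)/c)
    rw [norm_iteratedFDeriv_zero, Real.norm_eq_abs] at h2
    rw [_root_.sq_abs ((h:ℝ)/c)] at h2
    have : ‖f ((h:ℝ)/c)‖ ≤ C / ((h:ℝ)/c)^2 := by
      rw [le_div_iff₀ h1]
      linarith [h2]
    refine this.trans (le_of_eq ?_)
    field_simp
  rw [Filter.eventually_cofinite]
  exact Set.Finite.subset (Set.finite_singleton 0) this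

/-- the inner Poisson summation for a fixed residue. -/
lemma inner_poisson (c : ℕ) (hc : 0 < c) (g : SchwartzMap ℝ ℂ) (x : ℤ) :
    ∑' n : ℤ, (g ((x : ℝ) + c * n) : ℂ)
      = ∑' h : ℤ, (1/(c:ℂ)) * fourierHat g ((h:ℝ)/c)
          * Complex.exp (2 * Real.pi * Complex.I * h * x / c) := by
  have hcR : (0:ℝ) < c := by exact_mod_cast hc
  have hcc : ((c:ℝ):ℂ) ≠ 0 := by exact_mod_cast hcR.ne'
  have := SchwartzMap.tsum_eq_tsum_fourier (schwartzScale g c hcR.ne') ((x:ℝ)/c)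
  have hL : ∀ n : ℤ, schwartzScale g c hcR.ne' ((x:ℝ)/c + n) = g ((x:ℝ) + c * n) := by
    intro n
    rw [schwartzScale_apply]
    congr 1
    field_simp
  have hR : ∀ h : ℤ, (SchwartzMap.fourierTransformCLM ℝ (schwartzScale g c hcR.ne')) h
        * fourier h (((x:ℝ)/c : ℝ) : UnitAddCircle)
      = (1/(c:ℂ)) * fourierHat g ((h:ℝ)/c) * Complex.exp (2 * Real.pi * Complex.I * h * x / c) := by
    intro h
    rw [SchwartzMap.fourierTransformCLM_apply, SchwartzMap.fourier_coe, fourier_schwartzScale g c hcR, fourier_coe_apply]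
    congr 1
    push_cast
    field_simp
  simp only [SchwartzMap.fourierTransformCLM_apply] at hR
  simp_rw [hL, hR] at this
  exact this

end Aux

section Equiv

/-- residues `[1,c]` paired with `ℤ` enumerate `ℤ`. -/
def resEquiv (c : ℕ) (hc : 0 < c) : ((Finset.Icc 1 c) × ℤ) ≃ ℤ where
  toFun p := (p.1.1 : ℤ) + c * p.2
  invFun m := (⟨((m - 1) % c).toNat + 1, by
      have h0 : (0:ℤ) < c := by exact_mod_cast hc
      have h1 : 0 ≤ (m - 1) % c := Int.emod_nonneg _ h0.ne'
      have h2 : (m - 1) % c < c := Int.emod_lt_of_pos _ h0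
      simp only [Finset.mem_Icc]
      omega⟩, (m - 1) / c)
  left_inv := by
    rintro ⟨⟨x, hx⟩, n⟩
    have h0 : (0:ℤ) < c := by exact_mod_cast hc
    simp only [Finset.mem_Icc] at hx
    have hx1 : (1:ℤ) ≤ x := by exact_mod_cast hx.1
    have hx2 : (x:ℤ) ≤ c := by exact_mod_cast hx.2
    have key : ((x:ℤ) + c * n - 1) = (x - 1) + c * n := by ring
    have hmod : ((x:ℤ) + c * n - 1) % c = (x:ℤ) - 1 := by
      rw [key, Int.add_mul_emod_self_left, Int.emod_eq_of_lt (by omega) (by omega)]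
    have hdiv : ((x:ℤ) + c * n - 1) / c = n := by
      rw [key, Int.add_mul_ediv_left _ _ h0.ne', Int.ediv_eq_zero_of_lt (by omega) (by omega),
        zero_add]
    ext
    · simp only [hmod]; omega
    · simpa using hdiv
  right_inv := by
    intro m
    have h0 : (0:ℤ) < c := by exact_mod_cast hc
    have h1 : 0 ≤ (m - 1) % c := Int.emod_nonneg _ h0.ne'
    have := Int.mul_ediv_add_emod (m - 1) c
    simp only []
    push_cast [Int.toNat_of_nonneg h1]
    omega

end Equiv

section Residue

lemma intInvMod_shift (c : ℕ) (x : ℕ) (n : ℤ) :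
    intInvMod c ((x:ℤ) + c * n) = intInvMod c x := by
  unfold intInvMod
  congr 2
  push_cast [ZMod.natCast_self]
  ring

lemma gcd_shift (c : ℕ) (x : ℕ) (n : ℤ) :
    Int.gcd ((x:ℤ) + c * n) c = Nat.gcd x c := by
  rw [← Int.gcd_natCast_natCast]
  apply Nat.dvd_antisymm
  · rw [← Int.natCast_dvd_natCast]
    refine Int.dvd_coe_gcd ?_ (Int.gcd_dvd_right _ _)
    have h1 : (Int.gcd ((x:ℤ) + c * n) c : ℤ) ∣ ((x:ℤ) + c * n) := Int.gcd_dvd_left _ _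
    have h2 : (Int.gcd ((x:ℤ) + c * n) c : ℤ) ∣ (c:ℤ) * n := (Int.gcd_dvd_right _ _).mul_right n
    simpa using dvd_sub h1 h2
  · rw [← Int.natCast_dvd_natCast]
    refine Int.dvd_coe_gcd ?_ (Int.gcd_dvd_right _ _)
    have h1 : (Int.gcd (x:ℤ) c : ℤ) ∣ (x:ℤ) := Int.gcd_dvd_left _ _
    have h2 : (Int.gcd (x:ℤ) c : ℤ) ∣ (c:ℤ) * n := (Int.gcd_dvd_right _ _).mul_right n
    exact dvd_add h1 h2

end Residue

open FourierTransform Real Complex in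
lemma norm_exp_twoPiI (r : ℝ) : ‖Complex.exp ((r:ℂ) * Complex.I)‖ = 1 :=
  Complex.norm_exp_ofReal_mul_I r

open FourierTransform Real Complex

/-- Poisson summation producing Kloosterman sums: for a Schwartz function `g`,
`∑_{gcd(m,c)=1} e^{2πium̄/c} g(m) = (1/c) ∑_h S(u,h;c) ĝ(h/c)`,
both series converging absolutely. -/
theorem poisson_kloosterman
    (c : ℕ) (hc : 0 < c) (u : ℤ) (g : SchwartzMap ℝ ℂ) :
    Summable (fun m : ℤ =>
      ‖if Int.gcd m c = 1 then
          Complex.exp (2 * Real.pi * Complex.I * ((u * intInvMod c m : ℤ) : ℂ) / c) * g m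
        else 0‖) ∧
    Summable (fun h : ℤ => ‖kloostermanS u h c * fourierHat g ((h : ℝ) / c)‖) ∧
    (∑' m : ℤ,
        if Int.gcd m c = 1 then
          Complex.exp (2 * Real.pi * Complex.I * ((u * intInvMod c m : ℤ) : ℂ) / c) * g m
        else 0) =
      (1 / (c : ℂ)) * ∑' h : ℤ, kloostermanS u h c * fourierHat g ((h : ℝ) / c) := by
  have hcR : (0:ℝ) < c := by exact_mod_cast hc
  have hcc : ((c:ℝ):ℂ) ≠ 0 := by exact_mod_cast hcR.ne'
  set f : ℤ → ℂ := fun m =>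
    if Int.gcd m c = 1 then
      Complex.exp (2 * Real.pi * Complex.I * ((u * intInvMod c m : ℤ) : ℂ) / c) * g m
    else 0 with hf
  -- norm of exponential factors
  have hexp : ∀ k : ℤ, ‖Complex.exp (2 * Real.pi * Complex.I * ((k:ℤ) : ℂ) / c)‖ = 1 := by
    intro k
    rw [show (2 * Real.pi * Complex.I * ((k:ℤ) : ℂ) / c : ℂ)
        = ((2 * Real.pi * k / c : ℝ) : ℂ) * Complex.I by push_cast; ring]
    exact norm_exp_twoPiI _
  -- norm bound for f
  have hfb : ∀ m : ℤ, ‖f m‖ ≤ ‖g ((m:ℤ) : ℝ)‖ := by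
    intro m
    rw [hf]
    dsimp only
    split_ifs with hm
    · rw [norm_mul, hexp]
      simp
    · simp
  have hg_sum : Summable fun m : ℤ => ‖g ((m:ℤ) : ℝ)‖ := by
    simpa using schwartz_summable_div g 1 one_pos
  have S1 : Summable fun m : ℤ => ‖f m‖ := by
    apply Summable.of_norm_bounded hg_sum
    intro m
    rw [norm_norm]
    exact hfb m
  -- Fourier-side summability
  have hFg : Summable fun h : ℤ => ‖fourierHat g ((h:ℝ)/c)‖ := by
    have : (fun h : ℤ => ‖fourierHat g ((h:ℝ)/c)‖)
        = fun h : ℤ => ‖(SchwartzMap.fourierTransformCLM ℝ g) ((h:ℝ)/c)‖ := by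
      funext h
      rw [fourierHat_eq, SchwartzMap.fourierTransformCLM_apply, SchwartzMap.fourier_coe]
    rw [this]
    exact schwartz_summable_div _ c hcR
  have hK : ∀ h : ℤ, ‖kloostermanS u h c‖ ≤ (c:ℝ) := by
    intro h
    rw [kloostermanS]
    refine (norm_sum_le _ _).trans ?_
    have : ∀ x ∈ Finset.Icc 1 c,
        ‖if Nat.gcd x c = 1 then
            Complex.exp (2 * Real.pi * Complex.I * ((u * intInvMod c x + h * x : ℤ) : ℂ) / c)
          else 0‖ ≤ 1 := by
      intro x _
      split_ifs with hx
      · exact le_of_eq (hexp _)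
      · simp
    refine (Finset.sum_le_sum this).trans ?_
    simp [Nat.card_Icc]
  have S2 : Summable fun h : ℤ => ‖kloostermanS u h c * fourierHat g ((h : ℝ) / c)‖ := by
    apply Summable.of_norm_bounded (hFg.mul_left (c:ℝ))
    intro h
    rw [norm_norm, norm_mul]
    exact mul_le_mul_of_nonneg_right (hK h) (norm_nonneg _)
  refine ⟨S1, S2, ?_⟩
  -- main computation
  have hf_summable : Summable f := S1.of_norm
  have hE := (resEquiv c hc).tsum_eq f
  have hfE : Summable (f ∘ (resEquiv c hc)) := ((resEquiv c hc).summable_iff).mpr hf_summable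
  -- inner series, per residue
  have key : ∀ x : ℕ, x ∈ Finset.Icc 1 c → ∀ n : ℤ,
      f ((x:ℤ) + c * n) = (if Nat.gcd x c = 1 then
        Complex.exp (2 * Real.pi * Complex.I * ((u * intInvMod c x : ℤ) : ℂ) / c)
          * g (((x:ℤ):ℝ) + (c:ℝ) * (n:ℝ)) else 0) := by
    intro x _ n
    rw [hf]
    dsimp only
    rw [gcd_shift, intInvMod_shift]
    congr 1
    push_cast
    ring_nf
  calc ∑' m : ℤ, f m
      = ∑' p : ((Finset.Icc 1 c) × ℤ), f (resEquiv c hc p) := hE.symm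
    _ = ∑' x : (Finset.Icc 1 c), ∑' n : ℤ, f (resEquiv c hc (x, n)) :=
        Summable.tsum_prod' hfE (fun b => hfE.prod_factor b)
    _ = ∑' x : (Finset.Icc 1 c), ∑' n : ℤ, f (((x:ℕ):ℤ) + c * n) := by
        apply tsum_congr; intro x; apply tsum_congr; intro n; rfl
    _ = ∑ x ∈ Finset.Icc 1 c, ∑' n : ℤ, f ((x:ℤ) + c * n) :=
        Finset.tsum_subtype (Finset.Icc 1 c) (fun x => ∑' n : ℤ, f ((x:ℤ) + c * n))
    _ = ∑ x ∈ Finset.Icc 1 c, ∑' h : ℤ,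
          (if Nat.gcd x c = 1 then
            Complex.exp (2 * Real.pi * Complex.I * ((u * intInvMod c x : ℤ) : ℂ) / c)
              * ((1/(c:ℂ)) * fourierHat g ((h:ℝ)/c)
                  * Complex.exp (2 * Real.pi * Complex.I * h * x / c)) else 0) := by
        apply Finset.sum_congr rfl
        intro x hx
        rw [tsum_congr (key x hx)]
        by_cases hgcd : Nat.gcd x c = 1
        · simp only [hgcd, if_true]
          rw [tsum_mul_left, inner_poisson c hc g (x:ℤ), ← tsum_mul_left]
          apply tsum_congr
          intro h
          push_cast
          ring
        · simp [hgcd]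
    _ = ∑' h : ℤ, ∑ x ∈ Finset.Icc 1 c,
          (if Nat.gcd x c = 1 then
            Complex.exp (2 * Real.pi * Complex.I * ((u * intInvMod c x : ℤ) : ℂ) / c)
              * ((1/(c:ℂ)) * fourierHat g ((h:ℝ)/c)
                  * Complex.exp (2 * Real.pi * Complex.I * h * x / c)) else 0) := by
        refine (Summable.tsum_finsetSum ?_).symm
        intro x _
        by_cases hgcd : Nat.gcd x c = 1
        · simp only [hgcd, if_true]
          apply Summable.of_norm_bounded (hFg.mul_left ((1:ℝ)/c))
          intro h
          rw [norm_mul, hexp, one_mul, norm_mul, norm_mul]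
          rw [show (2 * Real.pi * Complex.I * (h:ℂ) * ((x:ℕ):ℂ) / c : ℂ)
              = ((2 * Real.pi * h * x / c : ℝ) : ℂ) * Complex.I by push_cast; ring]
          rw [norm_exp_twoPiI, mul_one]
          apply le_of_eq
          congr 1
          simp
        · simp only [hgcd, if_false]
          exact summable_zero
    _ = ∑' h : ℤ, (1/(c:ℂ)) * (kloostermanS u h c * fourierHat g ((h:ℝ)/c)) := by
        apply tsum_congr
        intro h
        rw [kloostermanS, Finset.sum_mul, Finset.mul_sum]
        apply Finset.sum_congr rfl
        intro x _
        by_cases hgcd : Nat.gcd x c = 1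
        · simp only [hgcd, if_true]
          have hsplit : Complex.exp (2 * Real.pi * Complex.I
                * ((u * intInvMod c (x:ℤ) + h * (x:ℤ) : ℤ) : ℂ) / (c:ℂ))
              = Complex.exp (2 * Real.pi * Complex.I * ((u * intInvMod c (x:ℤ) : ℤ) : ℂ) / (c:ℂ))
                * Complex.exp (2 * Real.pi * Complex.I * (h:ℂ) * ((x:ℕ):ℂ) / (c:ℂ)) := by
            rw [← Complex.exp_add]
            congr 1
            push_cast
            ring
          rw [hsplit]
          ring
        · simp [hgcd]
    _ = (1 / (c : ℂ)) * ∑' h : ℤ, kloostermanS u h c * fourierHat g ((h : ℝ) / c) :=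
        tsum_mul_left
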